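/- For every α with 1 ≤ α < 3/2 there exist n = 3 values 0 < v₁ < v₂ < v₃ and a prior f_𝒟 on them such that no signaling scheme is α-majorized: for every signaling scheme Z there exist a signaling scheme Z' and m ∈ (0,1] with α·PF(s_Z, m) < PF(s_{Z'}, m). -/

import Mathlib

open Finset MeasureTheory

namespace PD

noncomputable section

/-- Complementary CDF of a mass function `fS` at value `v i`. -/
def G {n : ℕ} (v fS : Fin n → ℝ) (i : Fin n) : ℝ :=
  ∑ j ∈ Finset.univ.filter (fun j => v i ≤ v j), fS j

/-- A signal is a probability mass function on the values. -/
def IsSignal {n : ℕ} (fS : Fin n → ℝ) : Prop :=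
  (∀ i, 0 ≤ fS i) ∧ ∑ i, fS i = 1

/-- The index of the seller's price: the smallest index maximizing `v i * G i`. -/
def priceIdx {n : ℕ} [NeZero n] (v fS : Fin n → ℝ) : Fin n :=
  (Finset.univ.filter (fun i => ∀ j, v j * G v fS j ≤ v i * G v fS i)).min' (by
    haveI : Nonempty (Fin n) := ⟨⟨0, Nat.pos_of_ne_zero (NeZero.ne n)⟩⟩
    obtain ⟨b, _, hb⟩ := Finset.exists_max_image (Finset.univ : Finset (Fin n))
      (fun i => v i * G v fS i) Finset.univ_nonempty
    exact ⟨b, Finset.mem_filter.mpr ⟨Finset.mem_univ _, fun j => hb j (Finset.mem_univ _)⟩⟩)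

/-- Consumer surplus of value `v i` under signal `fS`. -/
def cs {n : ℕ} [NeZero n] (v fS : Fin n → ℝ) (i : Fin n) : ℝ :=
  if v (priceIdx v fS) ≤ v i then v i - v (priceIdx v fS) else 0

/-- Revenue of a signal: the maximum of `v i * G i`. -/
def revSig {n : ℕ} [NeZero n] (v fS : Fin n → ℝ) : ℝ :=
  Finset.univ.sup' (by
    haveI : Nonempty (Fin n) := ⟨⟨0, Nat.pos_of_ne_zero (NeZero.ne n)⟩⟩
    exact Finset.univ_nonempty) (fun i => v i * G v fS i)

/-- A signaling scheme for prior mass function `f`. -/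
structure Scheme (n : ℕ) (f : Fin n → ℝ) where
  Q : ℕ
  sig : Fin Q → Fin n → ℝ
  wt : Fin Q → ℝ
  sig_isSignal : ∀ q, IsSignal (sig q)
  wt_nonneg : ∀ q, 0 ≤ wt q
  wt_sum : ∑ q, wt q = 1
  bayes : ∀ i, ∑ q, wt q * sig q i = f i

/-- Expected consumer surplus of value `v i` under scheme `Z`. -/
def csZ {n : ℕ} [NeZero n] (v f : Fin n → ℝ) (Z : Scheme n f) (i : Fin n) : ℝ :=
  ∑ q, cs v (Z.sig q) i * (Z.wt q * Z.sig q i / f i)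

/-- Expected revenue of a scheme. -/
def revZ {n : ℕ} [NeZero n] (v : Fin n → ℝ) {f : Fin n → ℝ} (Z : Scheme n f) : ℝ :=
  ∑ q, Z.wt q * revSig v (Z.sig q)

/-- A scheme is efficient if on every positive-weight signal, the smallest value
in the support maximizes `v * G`. -/
def Efficient {n : ℕ} (v : Fin n → ℝ) {f : Fin n → ℝ} (Z : Scheme n f) : Prop :=
  ∀ q, 0 < Z.wt q → ∀ i, (0 < Z.sig q i ∧ ∀ j, 0 < Z.sig q j → i ≤ j) →
    ∀ j, v j * G v (Z.sig q) j ≤ v i * G v (Z.sig q) i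

/-- A scheme is monotone if higher values get (weakly) higher expected surplus. -/
def MonotoneScheme {n : ℕ} [NeZero n] (v f : Fin n → ℝ) (Z : Scheme n f) : Prop :=
  ∀ i j : Fin n, v i < v j → csZ v f Z i ≤ csZ v f Z j

/-- A scheme is buyer-optimal if the total expected consumer surplus equals the
expected value minus the Myerson revenue. -/
def BuyerOptimal {n : ℕ} [NeZero n] (v f : Fin n → ℝ) (Z : Scheme n f) : Prop :=
  ∑ i, f i * csZ v f Z i = (∑ i, f i * v i) - revSig v f

/-- The surplus-mass step function of a scheme: equal to `csZ i` on the quantile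
interval `(F(v_{i-1}), F(v_i)]`. -/
def smf {n : ℕ} [NeZero n] (v f : Fin n → ℝ) (Z : Scheme n f) (x : ℝ) : ℝ :=
  ∑ i, if (∑ j ∈ Finset.univ.filter (fun j => j < i), f j) < x ∧
          x ≤ ∑ j ∈ Finset.univ.filter (fun j => j ≤ i), f j
       then csZ v f Z i else 0

/-- Sorted `m`-prefix sum of `g` on `(0,1]`: the infimum of `∫_T g` over
(measurable) subsets `T` of `(0,1]` of total length `m`. -/
def PF (g : ℝ → ℝ) (m : ℝ) : ℝ :=
  sInf { r : ℝ | ∃ T : Set ℝ, T ⊆ Set.Ioc 0 1 ∧ MeasurableSet T ∧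
    volume T = ENNReal.ofReal m ∧ r = ∫ x in T, g x }

/-- Integration `m`-prefix sum of `g`: `∫₀^m g`. -/
def PFV (g : ℝ → ℝ) (m : ℝ) : ℝ := ∫ x in Set.Ioc (0:ℝ) m, g x

/-- A singleton signal puts all mass on one value. -/
def IsSingleton {n : ℕ} (fS : Fin n → ℝ) : Prop :=
  ∃ i : Fin n, fS = fun j => if j = i then 1 else 0

/-- An equal-revenue binary signal on `v i < v j` puts mass `1 - v i / v j` on
`v i` and `v i / v j` on `v j`. -/
def IsEqRevBinary {n : ℕ} (v : Fin n → ℝ) (fS : Fin n → ℝ) : Prop :=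
  ∃ i j : Fin n, v i < v j ∧
    fS = fun l => if l = i then 1 - v i / v j else if l = j then v i / v j else 0

/-- `i` is the smallest value in the support of `fS`. -/
def MinSupp {n : ℕ} (fS : Fin n → ℝ) (i : Fin n) : Prop :=
  0 < fS i ∧ ∀ j, 0 < fS j → i ≤ j

end

noncomputable section Aux

attribute [local simp] Matrix.cons_val_two Matrix.vecHead Matrix.vecTail

def vv : Fin 3 → ℝ := ![1, 11/10, 3/2]
def ff : Fin 3 → ℝ := ![7/400, 1/4, 293/400]

lemma vv0 : vv 0 = 1 := rfl
lemma vv1 : vv 1 = 11/10 := rfl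
lemma vv2 : vv 2 = 3/2 := rfl
lemma ff0 : ff 0 = 7/400 := rfl
lemma ff1 : ff 1 = 1/4 := rfl
lemma ff2 : ff 2 = 293/400 := rfl

lemma priceIdx_mem {n : ℕ} [NeZero n] (v fS : Fin n → ℝ) :
    priceIdx v fS ∈ Finset.univ.filter (fun i => ∀ j, v j * G v fS j ≤ v i * G v fS i) :=
  Finset.min'_mem _ _

lemma priceIdx_spec {n : ℕ} [NeZero n] (v fS : Fin n → ℝ) (j : Fin n) :
    v j * G v fS j ≤ v (priceIdx v fS) * G v fS (priceIdx v fS) :=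
  (Finset.mem_filter.mp (priceIdx_mem v fS)).2 j

lemma priceIdx_le {n : ℕ} [NeZero n] (v fS : Fin n → ℝ) {i : Fin n}
    (hi : ∀ j, v j * G v fS j ≤ v i * G v fS i) : priceIdx v fS ≤ i :=
  Finset.min'_le _ _ (Finset.mem_filter.mpr ⟨Finset.mem_univ _, hi⟩)

lemma G_vv_0 (s : Fin 3 → ℝ) : G vv s 0 = s 0 + s 1 + s 2 := by
  unfold G
  rw [Finset.sum_filter, Fin.sum_univ_three]
  norm_num [vv0, vv1, vv2, vv]

lemma G_vv_1 (s : Fin 3 → ℝ) : G vv s 1 = s 1 + s 2 := by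
  unfold G
  rw [Finset.sum_filter, Fin.sum_univ_three]
  norm_num [vv]

lemma G_vv_2 (s : Fin 3 → ℝ) : G vv s 2 = s 2 := by
  unfold G
  rw [Finset.sum_filter, Fin.sum_univ_three]
  norm_num [vv]

lemma fin3_cases (p : Fin 3) : p = 0 ∨ p = 1 ∨ p = 2 := by omega

lemma priceIdx_eq_zero_of (s : Fin 3 → ℝ)
    (h1 : vv 1 * (s 1 + s 2) ≤ vv 0 * (s 0 + s 1 + s 2))
    (h2 : vv 2 * s 2 ≤ vv 0 * (s 0 + s 1 + s 2)) : priceIdx vv s = 0 := by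
  have h := priceIdx_le vv s (i := 0) (fun j => by
    rcases fin3_cases j with hj | hj | hj <;> subst hj <;>
      simp only [G_vv_0, G_vv_1, G_vv_2] <;> [exact le_refl _; exact h1; exact h2])
  exact Fin.le_zero_iff.mp h

lemma priceIdx_eq_one_of (s : Fin 3 → ℝ)
    (h0 : vv 0 * (s 0 + s 1 + s 2) < vv 1 * (s 1 + s 2))
    (h2 : vv 2 * s 2 ≤ vv 1 * (s 1 + s 2)) : priceIdx vv s = 1 := by
  have hle : priceIdx vv s ≤ 1 := priceIdx_le vv s (i := 1) (fun j => by
    rcases fin3_cases j with hj | hj | hj <;> subst hj <;>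
      simp only [G_vv_0, G_vv_1, G_vv_2] <;> [exact h0.le; exact le_refl _; exact h2])
  have hne : priceIdx vv s ≠ 0 := by
    intro h
    have := priceIdx_spec vv s 1
    rw [h, G_vv_0, G_vv_1] at this
    exact absurd this (not_le.mpr h0)
  rcases fin3_cases (priceIdx vv s) with h | h | h
  · exact absurd h hne
  · exact h
  · rw [h] at hle; exact absurd hle (by decide)

lemma priceIdx_eq_two_of (s : Fin 3 → ℝ)
    (h0 : vv 0 * (s 0 + s 1 + s 2) < vv 2 * s 2)
    (h1 : vv 1 * (s 1 + s 2) < vv 2 * s 2) : priceIdx vv s = 2 := by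
  rcases fin3_cases (priceIdx vv s) with h | h | h
  · have := priceIdx_spec vv s 2
    rw [h, G_vv_0, G_vv_2] at this
    exact absurd this (not_le.mpr h0)
  · have := priceIdx_spec vv s 2
    rw [h, G_vv_1, G_vv_2] at this
    exact absurd this (not_le.mpr h1)
  · exact h

lemma cs_vv_zero (s : Fin 3 → ℝ) : cs vv s 0 = 0 := by
  unfold cs
  rcases fin3_cases (priceIdx vv s) with h | h | h <;> rw [h] <;> norm_num [vv]

lemma cs_vv_one (s : Fin 3 → ℝ) :
    cs vv s 1 = if priceIdx vv s = 0 then 1/10 else 0 := by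
  unfold cs
  rcases fin3_cases (priceIdx vv s) with h | h | h <;> simp only [h] <;> norm_num [vv, show (2:Fin 3) ≠ 0 from by omega, show (2:Fin 3) ≠ 1 from by omega]

lemma cs_vv_two (s : Fin 3 → ℝ) :
    cs vv s 2 = if priceIdx vv s = 0 then 1/2 else if priceIdx vv s = 1 then 2/5 else 0 := by
  unfold cs
  rcases fin3_cases (priceIdx vv s) with h | h | h <;> simp only [h] <;> norm_num [vv, show (2:Fin 3) ≠ 0 from by omega, show (2:Fin 3) ≠ 1 from by omega]

lemma cs_nonneg {n : ℕ} [NeZero n] (v fS : Fin n → ℝ) (i : Fin n) : 0 ≤ cs v fS i := by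
  unfold cs
  split
  · linarith [‹v (priceIdx v fS) ≤ v i›]
  · exact le_refl 0
def ZB : Scheme 3 ff where
  Q := 3
  sig := ![![1/11, 10/11, 0], ![0, 4/15, 11/15], ![0, 0, 1]]
  wt := ![77/400, 9/32, 421/800]
  sig_isSignal := by
    intro q
    fin_cases q <;> constructor <;>
      first
        | (intro i; fin_cases i <;> norm_num)
        | (rw [Fin.sum_univ_three]; norm_num)
  wt_nonneg := by intro q; fin_cases q <;> norm_num
  wt_sum := by rw [Fin.sum_univ_three]; norm_num
  bayes := by intro i; fin_cases i <;> rw [Fin.sum_univ_three] <;> norm_num [ff, Matrix.vecHead, Matrix.vecTail]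

def ZA : Scheme 3 ff where
  Q := 3
  sig := ![![1/3, 0, 2/3], ![0, 4/15, 11/15], ![0, 0, 1]]
  wt := ![21/400, 15/16, 1/100]
  sig_isSignal := by
    intro q
    fin_cases q <;> constructor <;>
      first
        | (intro i; fin_cases i <;> norm_num)
        | (rw [Fin.sum_univ_three]; norm_num)
  wt_nonneg := by intro q; fin_cases q <;> norm_num
  wt_sum := by rw [Fin.sum_univ_three]; norm_num
  bayes := by intro i; fin_cases i <;> rw [Fin.sum_univ_three] <;> norm_num [ff, Matrix.vecHead, Matrix.vecTail]

lemma price_sB0 : priceIdx vv ![1/11, 10/11, (0:ℝ)] = 0 := by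
  apply priceIdx_eq_zero_of <;> norm_num [vv]

lemma price_sA0 : priceIdx vv ![1/3, 0, (2:ℝ)/3] = 0 := by
  apply priceIdx_eq_zero_of <;> norm_num [vv]

lemma price_s1 : priceIdx vv ![0, 4/15, (11:ℝ)/15] = 1 := by
  apply priceIdx_eq_one_of <;> norm_num [vv]

lemma price_s2 : priceIdx vv ![0, 0, (1:ℝ)] = 2 := by
  apply priceIdx_eq_two_of <;> norm_num [vv]

lemma csZ_ZB_1 : csZ vv ff ZB 1 = 7/100 := by
  unfold csZ
  simp only [ZB, ZA]
  erw [Fin.sum_univ_three]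
  show cs vv ![1/11, 10/11, (0:ℝ)] 1 * _ + cs vv ![0, 4/15, (11:ℝ)/15] 1 * _
      + cs vv ![0, 0, (1:ℝ)] 1 * _ = _
  rw [cs_vv_one, cs_vv_one, cs_vv_one, price_sB0, price_s1, price_s2]
  norm_num [ff, ZB, show (2:Fin 3) ≠ 0 from by omega, show (2:Fin 3) ≠ 1 from by omega]

lemma csZ_ZB_2 : csZ vv ff ZB 2 = 33/293 := by
  unfold csZ
  simp only [ZB, ZA]
  erw [Fin.sum_univ_three]
  show cs vv ![1/11, 10/11, (0:ℝ)] 2 * _ + cs vv ![0, 4/15, (11:ℝ)/15] 2 * _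
      + cs vv ![0, 0, (1:ℝ)] 2 * _ = _
  rw [cs_vv_two, cs_vv_two, cs_vv_two, price_sB0, price_s1, price_s2]
  norm_num [ff, ZB, show (2:Fin 3) ≠ 0 from by omega, show (2:Fin 3) ≠ 1 from by omega]

lemma csZ_ZA_2 : csZ vv ff ZA 2 = 117/293 := by
  unfold csZ
  simp only [ZB, ZA]
  erw [Fin.sum_univ_three]
  show cs vv ![1/3, 0, (2:ℝ)/3] 2 * _ + cs vv ![0, 4/15, (11:ℝ)/15] 2 * _
      + cs vv ![0, 0, (1:ℝ)] 2 * _ = _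
  rw [cs_vv_two, cs_vv_two, cs_vv_two, price_sA0, price_s1, price_s2]
  norm_num [ff, ZA, show (2:Fin 3) ≠ 0 from by omega, show (2:Fin 3) ≠ 1 from by omega]
lemma csZ_nonneg (Z : Scheme 3 ff) (i : Fin 3) : 0 ≤ csZ vv ff Z i := by
  unfold csZ
  apply Finset.sum_nonneg
  intro q _
  have h1 := cs_nonneg vv (Z.sig q) i
  have h2 := Z.wt_nonneg q
  have h3 := (Z.sig_isSignal q).1 i
  have h4 : (0:ℝ) < ff i := by fin_cases i <;> norm_num [ff]
  positivity

lemma csZ_zero (Z : Scheme 3 ff) : csZ vv ff Z 0 = 0 := by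
  unfold csZ
  apply Finset.sum_eq_zero
  intro q _
  rw [cs_vv_zero, zero_mul]

lemma smf_eq (Z : Scheme 3 ff) (x : ℝ) : smf vv ff Z x =
    (Set.Ioc (0:ℝ) (7/400)).indicator (fun _ => csZ vv ff Z 0) x
  + (Set.Ioc (7/400:ℝ) (107/400)).indicator (fun _ => csZ vv ff Z 1) x
  + (Set.Ioc (107/400:ℝ) 1).indicator (fun _ => csZ vv ff Z 2) x := by
  unfold smf
  rw [Fin.sum_univ_three]
  norm_num [Finset.sum_filter, Fin.sum_univ_three, ff, Fin.lt_def, Fin.le_def,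
    Set.indicator_apply, Set.mem_Ioc]

lemma integrable_piece (a b c : ℝ) :
    Integrable ((Set.Ioc a b).indicator (fun _ => c)) := by
  rw [MeasureTheory.integrable_indicator_iff measurableSet_Ioc]
  exact MeasureTheory.integrableOn_const (hs := measure_Ioc_lt_top.ne)

lemma setIntegral_smf (Z : Scheme 3 ff) (T : Set ℝ) (hT : MeasurableSet T) :
    ∫ x in T, smf vv ff Z x =
      csZ vv ff Z 0 * (volume (T ∩ Set.Ioc (0:ℝ) (7/400))).toReal
    + csZ vv ff Z 1 * (volume (T ∩ Set.Ioc (7/400:ℝ) (107/400))).toReal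
    + csZ vv ff Z 2 * (volume (T ∩ Set.Ioc (107/400:ℝ) 1)).toReal := by
  have hpc : ∀ (a b c : ℝ), ∫ x in T, (Set.Ioc a b).indicator (fun _ => c) x
      = c * (volume (T ∩ Set.Ioc a b)).toReal := by
    intro a b c
    rw [MeasureTheory.setIntegral_indicator measurableSet_Ioc,
      MeasureTheory.setIntegral_const, smul_eq_mul, mul_comm, Measure.real]
  calc ∫ x in T, smf vv ff Z x
      = ∫ x in T, ((Set.Ioc (0:ℝ) (7/400)).indicator (fun _ => csZ vv ff Z 0) x
        + (Set.Ioc (7/400:ℝ) (107/400)).indicator (fun _ => csZ vv ff Z 1) x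
        + (Set.Ioc (107/400:ℝ) 1).indicator (fun _ => csZ vv ff Z 2) x) := by
        apply MeasureTheory.setIntegral_congr_fun hT
        intro x _
        exact smf_eq Z x
    _ = _ := by
        have h0 : Integrable (fun x => (Set.Ioc (0:ℝ) (7/400)).indicator
            (fun _ => csZ vv ff Z 0) x) (volume.restrict T) :=
          (integrable_piece _ _ _).restrict
        have h1 : Integrable (fun x => (Set.Ioc (7/400:ℝ) (107/400)).indicator
            (fun _ => csZ vv ff Z 1) x) (volume.restrict T) :=
          (integrable_piece _ _ _).restrict
        have h2 : Integrable (fun x => (Set.Ioc (107/400:ℝ) 1).indicator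
            (fun _ => csZ vv ff Z 2) x) (volume.restrict T) :=
          (integrable_piece _ _ _).restrict
        have h01 : Integrable (fun x => (Set.Ioc (0:ℝ) (7/400)).indicator
            (fun _ => csZ vv ff Z 0) x + (Set.Ioc (7/400:ℝ) (107/400)).indicator
            (fun _ => csZ vv ff Z 1) x) (volume.restrict T) := h0.add h1
        rw [MeasureTheory.integral_add h01 h2, MeasureTheory.integral_add h0 h1,
          hpc, hpc, hpc]

lemma integrable_smf (Z : Scheme 3 ff) : Integrable (smf vv ff Z) := by
  have : smf vv ff Z = fun x =>
      (Set.Ioc (0:ℝ) (7/400)).indicator (fun _ => csZ vv ff Z 0) x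
    + (Set.Ioc (7/400:ℝ) (107/400)).indicator (fun _ => csZ vv ff Z 1) x
    + (Set.Ioc (107/400:ℝ) 1).indicator (fun _ => csZ vv ff Z 2) x := funext (smf_eq Z)
  rw [this]
  exact ((integrable_piece _ _ _).add (integrable_piece _ _ _)).add (integrable_piece _ _ _)

lemma smf_nonneg (Z : Scheme 3 ff) (x : ℝ) : 0 ≤ smf vv ff Z x := by
  rw [smf_eq]
  have h0 := csZ_nonneg Z 0
  have h1 := csZ_nonneg Z 1
  have h2 := csZ_nonneg Z 2
  refine add_nonneg (add_nonneg ?_ ?_) ?_ <;>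
    exact Set.indicator_nonneg (fun _ _ => by assumption) _
lemma csZ_ZA_1 : csZ vv ff ZA 1 = 0 := by
  unfold csZ
  simp only [ZA]
  erw [Fin.sum_univ_three]
  show cs vv ![1/3, 0, (2:ℝ)/3] 1 * _ + cs vv ![0, 4/15, (11:ℝ)/15] 1 * _
      + cs vv ![0, 0, (1:ℝ)] 1 * _ = _
  rw [cs_vv_one, cs_vv_one, cs_vv_one, price_sA0, price_s1, price_s2]
  norm_num [ff]

lemma PF_bddBelow (Z : Scheme 3 ff) (m : ℝ) :
    BddBelow { r : ℝ | ∃ T : Set ℝ, T ⊆ Set.Ioc 0 1 ∧ MeasurableSet T ∧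
      volume T = ENNReal.ofReal m ∧ r = ∫ x in T, smf vv ff Z x } := by
  refine ⟨0, fun r hr => ?_⟩
  obtain ⟨T, hsub, hmeas, hvol, hr⟩ := hr
  rw [hr]
  exact MeasureTheory.setIntegral_nonneg hmeas (fun x _ => smf_nonneg Z x)

lemma PF_mem (Z : Scheme 3 ff) (m : ℝ) (hm0 : 0 ≤ m) (hm1 : m ≤ 1) :
    (∫ x in Set.Ioc (0:ℝ) m, smf vv ff Z x) ∈
      { r : ℝ | ∃ T : Set ℝ, T ⊆ Set.Ioc 0 1 ∧ MeasurableSet T ∧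
        volume T = ENNReal.ofReal m ∧ r = ∫ x in T, smf vv ff Z x } := by
  refine ⟨Set.Ioc 0 m, Set.Ioc_subset_Ioc_right hm1, measurableSet_Ioc, ?_, rfl⟩
  rw [Real.volume_Ioc, sub_zero]

lemma PF_le_m1 (Z : Scheme 3 ff) :
    PF (smf vv ff Z) (107/400) ≤ csZ vv ff Z 1 * (1/4) := by
  have h := csInf_le (PF_bddBelow Z (107/400)) (PF_mem Z (107/400) (by norm_num) (by norm_num))
  refine le_trans h ?_
  rw [setIntegral_smf Z _ measurableSet_Ioc, csZ_zero,
    Set.Ioc_inter_Ioc, Set.Ioc_inter_Ioc, Set.Ioc_inter_Ioc,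
    Real.volume_Ioc, Real.volume_Ioc, Real.volume_Ioc]
  norm_num [ENNReal.toReal_ofReal]

lemma PF_le_one (Z : Scheme 3 ff) :
    PF (smf vv ff Z) 1 ≤ csZ vv ff Z 1 * (1/4) + csZ vv ff Z 2 * (293/400) := by
  have h := csInf_le (PF_bddBelow Z 1) (PF_mem Z 1 (by norm_num) (by norm_num))
  refine le_trans h ?_
  rw [setIntegral_smf Z _ measurableSet_Ioc, csZ_zero,
    Set.Ioc_inter_Ioc, Set.Ioc_inter_Ioc, Set.Ioc_inter_Ioc,
    Real.volume_Ioc, Real.volume_Ioc, Real.volume_Ioc]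
  norm_num [ENNReal.toReal_ofReal]

lemma vol_pieces (T : Set ℝ) (hsub : T ⊆ Set.Ioc 0 1) (m : ℝ) (hm0 : 0 ≤ m)
    (hvol : volume T = ENNReal.ofReal m) :
    m ≤ (volume (T ∩ Set.Ioc (0:ℝ) (7/400))).toReal
        + (volume (T ∩ Set.Ioc (7/400:ℝ) (107/400))).toReal
        + (volume (T ∩ Set.Ioc (107/400:ℝ) 1)).toReal
      ∧ (volume (T ∩ Set.Ioc (0:ℝ) (7/400))).toReal ≤ 7/400
      ∧ (volume (T ∩ Set.Ioc (7/400:ℝ) (107/400))).toReal ≤ 1/4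
      ∧ (volume (T ∩ Set.Ioc (107/400:ℝ) 1)).toReal ≤ 293/400 := by
  set I0 : Set ℝ := Set.Ioc 0 (7/400)
  set I1 : Set ℝ := Set.Ioc (7/400:ℝ) (107/400)
  set I2 : Set ℝ := Set.Ioc (107/400:ℝ) 1
  have hI0 : volume I0 = ENNReal.ofReal (7/400) := by
    rw [Real.volume_Ioc]; norm_num
  have hI1 : volume I1 = ENNReal.ofReal (1/4) := by
    rw [Real.volume_Ioc]; norm_num
  have hI2 : volume I2 = ENNReal.ofReal (293/400) := by
    rw [Real.volume_Ioc]; norm_num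
  have hb0 : volume (T ∩ I0) ≤ ENNReal.ofReal (7/400) := hI0 ▸ measure_mono Set.inter_subset_right
  have hb1 : volume (T ∩ I1) ≤ ENNReal.ofReal (1/4) := hI1 ▸ measure_mono Set.inter_subset_right
  have hb2 : volume (T ∩ I2) ≤ ENNReal.ofReal (293/400) := hI2 ▸ measure_mono Set.inter_subset_right
  have hn0 : volume (T ∩ I0) ≠ ⊤ := (lt_of_le_of_lt hb0 ENNReal.ofReal_lt_top).ne
  have hn1 : volume (T ∩ I1) ≠ ⊤ := (lt_of_le_of_lt hb1 ENNReal.ofReal_lt_top).ne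
  have hn2 : volume (T ∩ I2) ≠ ⊤ := (lt_of_le_of_lt hb2 ENNReal.ofReal_lt_top).ne
  have hcover : T ⊆ (T ∩ I0) ∪ (T ∩ I1) ∪ (T ∩ I2) := by
    intro x hx
    have hx1 := hsub hx
    simp only [Set.mem_Ioc] at hx1
    by_cases h1 : x ≤ 7/400
    · exact Or.inl (Or.inl ⟨hx, hx1.1, h1⟩)
    · by_cases h2 : x ≤ 107/400
      · exact Or.inl (Or.inr ⟨hx, not_le.mp h1, h2⟩)
      · exact Or.inr ⟨hx, not_le.mp h2, hx1.2⟩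
  have hle : ENNReal.ofReal m ≤ volume (T ∩ I0) + volume (T ∩ I1) + volume (T ∩ I2) := by
    calc ENNReal.ofReal m = volume T := hvol.symm
    _ ≤ volume ((T ∩ I0) ∪ (T ∩ I1) ∪ (T ∩ I2)) := measure_mono hcover
    _ ≤ volume ((T ∩ I0) ∪ (T ∩ I1)) + volume (T ∩ I2) := measure_union_le _ _
    _ ≤ volume (T ∩ I0) + volume (T ∩ I1) + volume (T ∩ I2) := by
        exact add_le_add (measure_union_le _ _) le_rfl
  have hsumne : volume (T ∩ I0) + volume (T ∩ I1) + volume (T ∩ I2) ≠ ⊤ := by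
    simp [ENNReal.add_ne_top, hn0, hn1, hn2]
  have hmle := ENNReal.toReal_mono hsumne hle
  rw [ENNReal.toReal_ofReal hm0, ENNReal.toReal_add (by simp [ENNReal.add_ne_top, hn0, hn1]) hn2,
    ENNReal.toReal_add hn0 hn1] at hmle
  refine ⟨hmle, ?_, ?_, ?_⟩
  · have := ENNReal.toReal_mono (by simp) hb0
    rwa [ENNReal.toReal_ofReal (by norm_num)] at this
  · have := ENNReal.toReal_mono (by simp) hb1
    rwa [ENNReal.toReal_ofReal (by norm_num)] at this
  · have := ENNReal.toReal_mono (by simp) hb2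
    rwa [ENNReal.toReal_ofReal (by norm_num)] at this

lemma PF_ZB_ge : (7/400 : ℝ) ≤ PF (smf vv ff ZB) (107/400) := by
  apply le_csInf ⟨_, PF_mem ZB (107/400) (by norm_num) (by norm_num)⟩
  rintro r ⟨T, hsub, hmeas, hvol, hr⟩
  rw [hr, setIntegral_smf ZB T hmeas, csZ_zero, csZ_ZB_1, csZ_ZB_2]
  obtain ⟨h, hb0, hb1, hb2⟩ := vol_pieces T hsub (107/400) (by norm_num) hvol
  set r1 := (volume (T ∩ Set.Ioc (7/400:ℝ) (107/400))).toReal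
  set r2 := (volume (T ∩ Set.Ioc (107/400:ℝ) 1)).toReal
  have h1 : 0 ≤ r1 := ENNReal.toReal_nonneg
  have h2 : 0 ≤ r2 := ENNReal.toReal_nonneg
  have key : (7/100:ℝ) * r2 ≤ (33/293) * r2 := by nlinarith
  nlinarith

lemma PF_ZA_ge : (117/400 : ℝ) ≤ PF (smf vv ff ZA) 1 := by
  apply le_csInf ⟨_, PF_mem ZA 1 (by norm_num) (by norm_num)⟩
  rintro r ⟨T, hsub, hmeas, hvol, hr⟩
  rw [hr, setIntegral_smf ZA T hmeas, csZ_zero, csZ_ZA_1, csZ_ZA_2]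
  obtain ⟨h, hb0, hb1, hb2⟩ := vol_pieces T hsub 1 (by norm_num) hvol
  set r2 := (volume (T ∩ Set.Ioc (107/400:ℝ) 1)).toReal
  have h2 : 0 ≤ r2 := ENNReal.toReal_nonneg
  nlinarith
theorem stmt18' (α : ℝ) (hα : 1 ≤ α) (hα' : α < 3 / 2) :
    ∃ (v f : Fin 3 → ℝ), StrictMono v ∧ (∀ i, 0 < v i) ∧
      (∀ i, 0 < f i) ∧ (∑ i, f i = 1) ∧
      ∀ Z : Scheme 3 f,
        ∃ (Z' : Scheme 3 f) (m : ℝ), 0 < m ∧ m ≤ 1 ∧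
          α * PF (smf v f Z) m < PF (smf v f Z') m := by
  refine ⟨vv, ff, ?_, ?_, ?_, ?_, ?_⟩
  · intro i j hij
    fin_cases i <;> fin_cases j <;> simp_all <;> norm_num [vv] <;>
      exact absurd hij (by omega)
  · intro i; fin_cases i <;> norm_num [vv]
  · intro i; fin_cases i <;> norm_num [ff]
  · rw [Fin.sum_univ_three]; norm_num [ff]
  intro Z
  set x := ∑ q, (if priceIdx vv (Z.sig q) = 0 then Z.wt q * Z.sig q 1 else 0) with hx
  set y := ∑ q, (if priceIdx vv (Z.sig q) = 0 then Z.wt q * Z.sig q 2 else 0) with hy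
  set z := ∑ q, (if priceIdx vv (Z.sig q) = 1 then Z.wt q * Z.sig q 2 else 0) with hz
  set A := ∑ q, (if priceIdx vv (Z.sig q) = 0 then Z.wt q * Z.sig q 0 else 0) with hA
  set Bm := ∑ q, (if priceIdx vv (Z.sig q) = 1 then Z.wt q * Z.sig q 1 else 0) with hB
  have hterm_nonneg : ∀ (q : Fin Z.Q) (i : Fin 3), 0 ≤ Z.wt q * Z.sig q i :=
    fun q i => mul_nonneg (Z.wt_nonneg q) ((Z.sig_isSignal q).1 i)
  have hx0 : 0 ≤ x := Finset.sum_nonneg fun q _ => by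
    split <;> [exact hterm_nonneg q 1; exact le_refl 0]
  have hy0 : 0 ≤ y := Finset.sum_nonneg fun q _ => by
    split <;> [exact hterm_nonneg q 2; exact le_refl 0]
  have hz0 : 0 ≤ z := Finset.sum_nonneg fun q _ => by
    split <;> [exact hterm_nonneg q 2; exact le_refl 0]
  have hBm0 : 0 ≤ Bm := Finset.sum_nonneg fun q _ => by
    split <;> [exact hterm_nonneg q 1; exact le_refl 0]
  -- S2
  have hS2 : csZ vv ff Z 1 * (1/4) = (1/10) * x := by
    unfold csZ
    rw [Finset.sum_mul, hx, Finset.mul_sum]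
    apply Finset.sum_congr rfl
    intro q _
    rw [cs_vv_one, ff1]
    split <;> ring
  -- S3
  have hS3 : csZ vv ff Z 2 * (293/400) = (1/2) * y + (2/5) * z := by
    unfold csZ
    rw [Finset.sum_mul, hy, hz, Finset.mul_sum, Finset.mul_sum, ← Finset.sum_add_distrib]
    apply Finset.sum_congr rfl
    intro q _
    rw [cs_vv_two, ff2]
    rcases fin3_cases (priceIdx vv (Z.sig q)) with h | h | h <;>
      simp only [h, if_true, if_false, reduceIte,
        show ((0:Fin 3) = 1) = False from by simp, show ((1:Fin 3) = 0) = False from by simp,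
        show ((2:Fin 3) = 0) = False from by simp, show ((2:Fin 3) = 1) = False from by simp,
        iff_false, ite_false, ite_true] <;> ring
  -- A ≤ f 0
  have hAle : A ≤ 7/400 := by
    have : A ≤ ∑ q, Z.wt q * Z.sig q 0 := Finset.sum_le_sum fun q _ => by
      split <;> [exact le_refl _; exact hterm_nonneg q 0]
    rw [Z.bayes 0] at this
    simpa [ff0] using this
  -- x + Bm ≤ f 1
  have hxBm : x + Bm ≤ 1/4 := by
    have : x + Bm ≤ ∑ q, Z.wt q * Z.sig q 1 := by
      rw [hx, hB, ← Finset.sum_add_distrib]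
      apply Finset.sum_le_sum
      intro q _
      rcases fin3_cases (priceIdx vv (Z.sig q)) with h | h | h <;>
        simp [h, hterm_nonneg q 1]
    rw [Z.bayes 1] at this
    simpa [ff1] using this
  -- price-0 aggregate inequality
  have hI : (11/10) * (x + y) ≤ A + x + y := by
    have key : ∀ q : Fin Z.Q,
        (11/10) * ((if priceIdx vv (Z.sig q) = 0 then Z.wt q * Z.sig q 1 else 0)
          + (if priceIdx vv (Z.sig q) = 0 then Z.wt q * Z.sig q 2 else 0))
        ≤ (if priceIdx vv (Z.sig q) = 0 then Z.wt q * Z.sig q 0 else 0)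
          + (if priceIdx vv (Z.sig q) = 0 then Z.wt q * Z.sig q 1 else 0)
          + (if priceIdx vv (Z.sig q) = 0 then Z.wt q * Z.sig q 2 else 0) := by
      intro q
      by_cases h : priceIdx vv (Z.sig q) = 0
      · simp only [h, if_true, ite_true, reduceIte]
        have hspec := priceIdx_spec vv (Z.sig q) 1
        rw [h, G_vv_0, G_vv_1, vv0, vv1] at hspec
        nlinarith [Z.wt_nonneg q]
      · simp [h]
    calc (11/10) * (x + y)
        = ∑ q, (11/10) * ((if priceIdx vv (Z.sig q) = 0 then Z.wt q * Z.sig q 1 else 0)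
          + (if priceIdx vv (Z.sig q) = 0 then Z.wt q * Z.sig q 2 else 0)) := by
          rw [hx, hy, ← Finset.sum_add_distrib, Finset.mul_sum]
      _ ≤ ∑ q, ((if priceIdx vv (Z.sig q) = 0 then Z.wt q * Z.sig q 0 else 0)
          + (if priceIdx vv (Z.sig q) = 0 then Z.wt q * Z.sig q 1 else 0)
          + (if priceIdx vv (Z.sig q) = 0 then Z.wt q * Z.sig q 2 else 0)) :=
          Finset.sum_le_sum fun q _ => key q
      _ = A + x + y := by
          rw [hA, hx, hy, ← Finset.sum_add_distrib, ← Finset.sum_add_distrib]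
  -- price-1 aggregate inequality
  have hIII : (3/2) * z ≤ (11/10) * (Bm + z) := by
    have key : ∀ q : Fin Z.Q,
        (3/2) * (if priceIdx vv (Z.sig q) = 1 then Z.wt q * Z.sig q 2 else 0)
        ≤ (11/10) * ((if priceIdx vv (Z.sig q) = 1 then Z.wt q * Z.sig q 1 else 0)
          + (if priceIdx vv (Z.sig q) = 1 then Z.wt q * Z.sig q 2 else 0)) := by
      intro q
      by_cases h : priceIdx vv (Z.sig q) = 1
      · simp only [h, if_true, ite_true, reduceIte]
        have hspec := priceIdx_spec vv (Z.sig q) 2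
        rw [h, G_vv_1, G_vv_2, vv1, vv2] at hspec
        nlinarith [Z.wt_nonneg q]
      · simp [h]
    calc (3/2) * z = ∑ q, (3/2) * (if priceIdx vv (Z.sig q) = 1 then Z.wt q * Z.sig q 2 else 0) := by
          rw [hz, Finset.mul_sum]
      _ ≤ ∑ q, (11/10) * ((if priceIdx vv (Z.sig q) = 1 then Z.wt q * Z.sig q 1 else 0)
          + (if priceIdx vv (Z.sig q) = 1 then Z.wt q * Z.sig q 2 else 0)) :=
          Finset.sum_le_sum fun q _ => key q
      _ = (11/10) * (Bm + z) := by
          rw [hB, hz, ← Finset.sum_add_distrib, ← Finset.mul_sum]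
  by_cases hcase : x ≤ 7/60
  · -- low surplus for v2: beaten by ZB at m = 107/400
    refine ⟨ZB, 107/400, by norm_num, by norm_num, ?_⟩
    have h1 : PF (smf vv ff Z) (107/400) ≤ 7/600 := by
      refine le_trans (PF_le_m1 Z) ?_
      rw [hS2]; linarith
    have h0 : 0 ≤ PF (smf vv ff Z) (107/400) :=
      le_csInf ⟨_, PF_mem Z (107/400) (by norm_num) (by norm_num)⟩ (by
        rintro r ⟨T, hsub, hmeas, hvol, hr⟩
        rw [hr]
        exact MeasureTheory.setIntegral_nonneg hmeas fun t _ => smf_nonneg Z t)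
    have := PF_ZB_ge
    nlinarith
  · -- high surplus for v2: beaten by ZA at m = 1
    refine ⟨ZA, 1, by norm_num, by norm_num, ?_⟩
    have hT : PF (smf vv ff Z) 1 ≤ 3/16 := by
      refine le_trans (PF_le_one Z) ?_
      rw [hS2, hS3]
      push_neg at hcase
      linarith
    have h0 : 0 ≤ PF (smf vv ff Z) 1 :=
      le_csInf ⟨_, PF_mem Z 1 (by norm_num) (by norm_num)⟩ (by
        rintro r ⟨T, hsub, hmeas, hvol, hr⟩
        rw [hr]
        exact MeasureTheory.setIntegral_nonneg hmeas fun t _ => smf_nonneg Z t)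
    have := PF_ZA_ge
    nlinarith
end Aux

theorem stmt18 (α : ℝ) (hα : 1 ≤ α) (hα' : α < 3 / 2) :
    ∃ (v f : Fin 3 → ℝ), StrictMono v ∧ (∀ i, 0 < v i) ∧
      (∀ i, 0 < f i) ∧ (∑ i, f i = 1) ∧
      ∀ Z : Scheme 3 f,
        ∃ (Z' : Scheme 3 f) (m : ℝ), 0 < m ∧ m ≤ 1 ∧
          α * PF (smf v f Z) m < PF (smf v f Z') m := by
  exact stmt18' α hα hα'

end PD
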